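/- Let f: S → ℝ be layer-wise (L⁰, L¹)-smooth. Let X = [X_1,…,X_p] ∈ S and suppose X⁺ = [X⁺_1,…,X⁺_p] is such that, for each i, X⁺_i minimizes the linear functional X_i ↦ ⟨∇_i f(X), X_i⟩_{(i)} over the ball {X_i ∈ S_i : ‖X_i − X_i‖_{(i)} ≤ t_i} of radius t_i = ‖∇_i f(X)‖_{(i)⋆} / (L⁰_i + L¹_i ‖∇_i f(X)‖_{(i)⋆}) centered at X_i. Then f(X⁺) ≤ f(X) − Σ_{i=1}^p ‖∇_i f(X)‖_{(i)⋆}² / (2 (L⁰_i + L¹_i ‖∇_i f(X)‖_{(i)⋆})). -/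

import Mathlib

noncomputable section
open Finset

/-- Trace inner product `⟨A,B⟩ = tr(AᵀB)` on `m×n` real matrices (viewed as functions). -/
def tip {m n : ℕ} (A B : Fin m → Fin n → ℝ) : ℝ := ∑ a, ∑ b, A a b * B a b

/-- An arbitrary norm on the space of `m×n` real matrices. -/
structure MatNorm (m n : ℕ) where
  N : (Fin m → Fin n → ℝ) → ℝ
  pos : ∀ A, A ≠ 0 → 0 < N A
  zero : N 0 = 0
  smul : ∀ (c : ℝ) (A : Fin m → Fin n → ℝ), N (c • A) = |c| * N A
  triangle : ∀ A B, N (A + B) ≤ N A + N B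

/-- The dual norm `‖A‖⋆ = sup_{‖Z‖ ≤ 1} ⟨A, Z⟩`. -/
def MatNorm.dual {m n : ℕ} (nn : MatNorm m n) (A : Fin m → Fin n → ℝ) : ℝ :=
  sSup {r : ℝ | ∃ Z, nn.N Z ≤ 1 ∧ r = tip A Z}

/-- `Y` minimizes the linear functional `Z ↦ ⟨G, Z⟩` over the ball of radius `t`
centered at `C` (the linear minimization oracle). -/
def IsLMOMin {m n : ℕ} (nn : MatNorm m n) (G C : Fin m → Fin n → ℝ) (t : ℝ)
    (Y : Fin m → Fin n → ℝ) : Prop :=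
  nn.N (Y - C) ≤ t ∧ ∀ Z, nn.N (Z - C) ≤ t → tip G Y ≤ tip G Z

namespace Aux
variable {m n : ℕ}

lemma N_nonneg (nn : MatNorm m n) (A : Fin m → Fin n → ℝ) : 0 ≤ nn.N A := by
  rcases eq_or_ne A 0 with h | h
  · simp [h, nn.zero]
  · exact (nn.pos A h).le

lemma N_neg (nn : MatNorm m n) (A : Fin m → Fin n → ℝ) : nn.N (-A) = nn.N A := by
  have := nn.smul (-1) A
  simpa using this

lemma tip_zero_right {A : Fin m → Fin n → ℝ} : tip A 0 = 0 := by simp [tip]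

lemma tip_smul_right (A : Fin m → Fin n → ℝ) (c : ℝ) (Z : Fin m → Fin n → ℝ) :
    tip A (c • Z) = c * tip A Z := by
  unfold tip
  rw [Finset.mul_sum]
  refine Finset.sum_congr rfl fun a _ => ?_
  rw [Finset.mul_sum]
  exact Finset.sum_congr rfl fun b _ => by simp [mul_comm, mul_left_comm]

lemma tip_sub_left (A B Z : Fin m → Fin n → ℝ) :
    tip (A - B) Z = tip A Z - tip B Z := by
  simp [tip, sub_mul, Finset.sum_sub_distrib]

lemma tip_sub_right (A Y C : Fin m → Fin n → ℝ) :
    tip A (Y - C) = tip A Y - tip A C := by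
  simp [tip, mul_sub, Finset.sum_sub_distrib]

lemma tip_neg_left (A Z : Fin m → Fin n → ℝ) : tip (-A) Z = - tip A Z := by
  simp [tip]

lemma tip_neg_right (A Z : Fin m → Fin n → ℝ) : tip A (-Z) = - tip A Z := by
  simp [tip]

lemma abs_entry_le (Z : Fin m → Fin n → ℝ) (a : Fin m) (b : Fin n) : |Z a b| ≤ ‖Z‖ := by
  calc |Z a b| = ‖Z a b‖ := rfl
    _ ≤ ‖Z a‖ := norm_le_pi_norm (Z a) b
    _ ≤ ‖Z‖ := norm_le_pi_norm Z a

lemma tip_le_norm (A Z : Fin m → Fin n → ℝ) :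
    tip A Z ≤ (∑ a, ∑ b, |A a b|) * ‖Z‖ := by
  rw [Finset.sum_mul]
  refine Finset.sum_le_sum fun a _ => ?_
  rw [Finset.sum_mul]
  refine Finset.sum_le_sum fun b _ => ?_
  calc A a b * Z a b ≤ |A a b * Z a b| := le_abs_self _
    _ = |A a b| * |Z a b| := abs_mul _ _
    _ ≤ |A a b| * ‖Z‖ := mul_le_mul_of_nonneg_left (abs_entry_le Z a b) (abs_nonneg _)

lemma N_sum (nn : MatNorm m n) {ι : Type*} (s : Finset ι) (F : ι → Fin m → Fin n → ℝ) :
    nn.N (∑ x ∈ s, F x) ≤ ∑ x ∈ s, nn.N (F x) := by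
  classical
  induction s using Finset.induction with
  | empty => simp [nn.zero]
  | insert _ _ h ih =>
    rw [Finset.sum_insert h, Finset.sum_insert h]
    exact (nn.triangle _ _).trans (by linarith)


def elt (a : Fin m) (b : Fin n) : Fin m → Fin n → ℝ := Pi.single a (Pi.single b (1:ℝ))

lemma decomp (Z : Fin m → Fin n → ℝ) :
    Z = ∑ a, ∑ b, Z a b • elt a b := by
  funext x y
  simp only [Finset.sum_apply, Pi.smul_apply, smul_eq_mul, elt, Pi.single_apply]
  simp [apply_ite (fun f : Fin n → ℝ => f y), Pi.single_apply]

lemma normA (nn : MatNorm m n) : ∃ C : ℝ, 0 ≤ C ∧ ∀ Z, nn.N Z ≤ C * ‖Z‖ := by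
  refine ⟨∑ a, ∑ b, nn.N (elt a b), ?_, ?_⟩
  · exact Finset.sum_nonneg fun a _ => Finset.sum_nonneg fun b _ => N_nonneg _ _
  intro Z
  calc nn.N Z = nn.N (∑ a, ∑ b, Z a b • elt a b) := by
        rw [← decomp]
    _ ≤ ∑ a, nn.N (∑ b, Z a b • elt a b) := N_sum nn _ _
    _ ≤ ∑ a, ∑ b, nn.N (Z a b • elt a b) :=
        Finset.sum_le_sum fun a _ => N_sum nn _ _
    _ ≤ ∑ a, ∑ b, nn.N (elt a b) * ‖Z‖ := by
        refine Finset.sum_le_sum fun a _ => Finset.sum_le_sum fun b _ => ?_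
        rw [nn.smul, mul_comm]
        exact mul_le_mul_of_nonneg_left (abs_entry_le Z a b) (N_nonneg _ _)
    _ = (∑ a, ∑ b, nn.N (elt a b)) * ‖Z‖ := by
        rw [Finset.sum_mul]
        exact Finset.sum_congr rfl fun a _ => (Finset.sum_mul _ _ _).symm

lemma N_continuous (nn : MatNorm m n) : Continuous nn.N := by
  obtain ⟨C, hC0, hC⟩ := normA nn
  have : LipschitzWith C.toNNReal nn.N := by
    refine LipschitzWith.of_dist_le_mul fun A B => ?_
    rw [Real.dist_eq, dist_eq_norm]
    have h1 : nn.N A - nn.N B ≤ nn.N (A - B) := by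
      have := nn.triangle (A - B) B
      simpa using this
    have h2 : nn.N B - nn.N A ≤ nn.N (A - B) := by
      have := nn.triangle (B - A) A
      have hn : nn.N (B - A) = nn.N (A - B) := by
        rw [← N_neg nn (B - A)]; congr 1; abel
      simp only [sub_add_cancel] at this
      linarith
    have h3 : |nn.N A - nn.N B| ≤ nn.N (A - B) := abs_sub_le_iff.mpr ⟨h1, h2⟩
    calc |nn.N A - nn.N B| ≤ nn.N (A - B) := h3
      _ ≤ C * ‖A - B‖ := hC _
      _ ≤ C.toNNReal * ‖A - B‖ :=
          mul_le_mul_of_nonneg_right (Real.le_coe_toNNReal C) (norm_nonneg _)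
  exact this.continuous

lemma normB (nn : MatNorm m n) : ∃ c : ℝ, 0 < c ∧ ∀ Z, ‖Z‖ ≤ c * nn.N Z := by
  rcases subsingleton_or_nontrivial (Fin m → Fin n → ℝ) with hs | hnt
  · refine ⟨1, one_pos, fun Z => ?_⟩
    have : Z = 0 := Subsingleton.elim _ _
    simp [this, nn.zero]
  · have hcpt : IsCompact (Metric.sphere (0 : Fin m → Fin n → ℝ) 1) := isCompact_sphere 0 1
    have hne : (Metric.sphere (0 : Fin m → Fin n → ℝ) 1).Nonempty :=
      NormedSpace.sphere_nonempty.mpr zero_le_one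
    obtain ⟨Z0, hZ0mem, hmin⟩ := hcpt.exists_isMinOn hne (N_continuous nn).continuousOn
    have hZ0norm : ‖Z0‖ = 1 := by simpa using hZ0mem
    have hZ0ne : Z0 ≠ 0 := by
      intro h; rw [h] at hZ0norm; simp at hZ0norm
    have hμ : 0 < nn.N Z0 := nn.pos Z0 hZ0ne
    refine ⟨(nn.N Z0)⁻¹, inv_pos.mpr hμ, fun Z => ?_⟩
    rcases eq_or_ne Z 0 with rfl | hZ
    · simp [nn.zero]
    · have hnZ : 0 < ‖Z‖ := norm_pos_iff.mpr hZ
      have hmem : (‖Z‖⁻¹ • Z) ∈ Metric.sphere (0 : Fin m → Fin n → ℝ) 1 := by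
        simp [norm_smul, abs_of_pos (inv_pos.mpr hnZ), inv_mul_cancel₀ hnZ.ne']
      have : nn.N Z0 ≤ nn.N (‖Z‖⁻¹ • Z) := hmin hmem
      rw [nn.smul, abs_of_pos (inv_pos.mpr hnZ)] at this
      -- N Z0 ≤ ‖Z‖⁻¹ * N Z
      have h2 : ‖Z‖ * nn.N Z0 ≤ ‖Z‖ * (‖Z‖⁻¹ * nn.N Z) :=
        mul_le_mul_of_nonneg_left this hnZ.le
      rw [← mul_assoc, mul_inv_cancel₀ hnZ.ne', one_mul] at h2
      rw [inv_mul_eq_div, le_div_iff₀ hμ]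
      exact h2


lemma zero_mem_dualSet (nn : MatNorm m n) (A : Fin m → Fin n → ℝ) :
    (0:ℝ) ∈ {r : ℝ | ∃ Z, nn.N Z ≤ 1 ∧ r = tip A Z} :=
  ⟨0, by simp [nn.zero], tip_zero_right.symm⟩

lemma bdd_dualSet (nn : MatNorm m n) (A : Fin m → Fin n → ℝ) :
    BddAbove {r : ℝ | ∃ Z, nn.N Z ≤ 1 ∧ r = tip A Z} := by
  obtain ⟨c, hc0, hc⟩ := normB nn
  refine ⟨(∑ a, ∑ b, |A a b|) * c, fun r hr => ?_⟩
  obtain ⟨Z, hZ, rfl⟩ := hr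
  have h1 : tip A Z ≤ (∑ a, ∑ b, |A a b|) * ‖Z‖ := tip_le_norm A Z
  have hA0 : 0 ≤ ∑ a, ∑ b, |A a b| :=
    Finset.sum_nonneg fun a _ => Finset.sum_nonneg fun b _ => abs_nonneg _
  have h2 : ‖Z‖ ≤ c * nn.N Z := hc Z
  have h3 : c * nn.N Z ≤ c * 1 := mul_le_mul_of_nonneg_left hZ hc0.le
  calc tip A Z ≤ (∑ a, ∑ b, |A a b|) * ‖Z‖ := h1
    _ ≤ (∑ a, ∑ b, |A a b|) * c := by
        refine mul_le_mul_of_nonneg_left ?_ hA0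
        linarith

lemma dual_nonneg (nn : MatNorm m n) (A : Fin m → Fin n → ℝ) : 0 ≤ nn.dual A :=
  le_csSup (bdd_dualSet nn A) (zero_mem_dualSet nn A)

lemma tip_le_dual (nn : MatNorm m n) (A Z : Fin m → Fin n → ℝ) :
    tip A Z ≤ nn.dual A * nn.N Z := by
  rcases eq_or_ne Z 0 with rfl | hZ
  · simp [tip_zero_right, nn.zero]
  · have hNZ : 0 < nn.N Z := nn.pos Z hZ
    have hmem : (nn.N Z)⁻¹ * tip A Z ∈ {r : ℝ | ∃ W, nn.N W ≤ 1 ∧ r = tip A W} := by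
      refine ⟨(nn.N Z)⁻¹ • Z, ?_, (tip_smul_right A _ Z).symm⟩
      rw [nn.smul, abs_of_pos (inv_pos.mpr hNZ), inv_mul_cancel₀ hNZ.ne']
    have h := le_csSup (bdd_dualSet nn A) hmem
    have h2 := (inv_mul_le_iff₀ hNZ).mp h
    rw [MatNorm.dual, mul_comm]
    exact h2

lemma neg_tip_le_dual (nn : MatNorm m n) (A Z : Fin m → Fin n → ℝ) :
    - tip A Z ≤ nn.dual A * nn.N Z := by
  have := tip_le_dual nn A (-Z)
  rw [tip_neg_right, N_neg] at this
  exact this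

lemma exists_near (nn : MatNorm m n) (A : Fin m → Fin n → ℝ) {ε : ℝ} (hε : 0 < ε) :
    ∃ Z, nn.N Z ≤ 1 ∧ nn.dual A - ε < tip A Z := by
  have h : nn.dual A - ε < sSup {r : ℝ | ∃ Z, nn.N Z ≤ 1 ∧ r = tip A Z} := by
    have : nn.dual A - ε < nn.dual A := by linarith
    exact this
  obtain ⟨r, hr, hlt⟩ := exists_lt_of_lt_csSup ⟨0, zero_mem_dualSet nn A⟩ h
  obtain ⟨Z, hZ, rfl⟩ := hr
  exact ⟨Z, hZ, hlt⟩

lemma lmo_step (nn : MatNorm m n) (G C Y : Fin m → Fin n → ℝ) (t : ℝ) (ht : 0 ≤ t)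
    (h : IsLMOMin nn G C t Y) : tip G (Y - C) ≤ -(t * nn.dual G) := by
  have key : ∀ ε : ℝ, 0 < ε → tip G (Y - C) ≤ -(t * nn.dual G) + t * ε := by
    intro ε hε
    obtain ⟨D, hD1, hD2⟩ := exists_near nn G hε
    have hZball : nn.N ((C - t • D) - C) ≤ t := by
      have : (C - t • D) - C = -(t • D) := by abel
      rw [this, N_neg, nn.smul, abs_of_nonneg ht]
      calc t * nn.N D ≤ t * 1 := mul_le_mul_of_nonneg_left hD1 ht
        _ = t := mul_one t
    have hY := h.2 _ hZball
    have hc : tip G (C - t • D) = tip G C - t * tip G D := by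
      rw [tip_sub_right, tip_smul_right]
    have h3 : t * (nn.dual G - ε) ≤ t * tip G D :=
      mul_le_mul_of_nonneg_left (by linarith) ht
    rw [tip_sub_right]
    have := hY.trans_eq hc
    nlinarith
  rcases ht.eq_or_lt with h0 | h0
  · have := key 1 one_pos
    rw [← h0] at this ⊢
    simpa using this
  · refine le_of_forall_pos_le_add fun δ hδ => ?_
    have := key (δ / t) (div_pos hδ h0)
    rwa [mul_div_cancel₀ _ h0.ne'] at this


end Aux

open Aux

/-- One-step descent of deterministic Gluon: if each `X⁺ᵢ` minimizes `⟨∇ᵢf(X), ·⟩` over the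
ball of radius `tᵢ = ‖∇ᵢf(X)‖⋆/(L⁰ᵢ + L¹ᵢ‖∇ᵢf(X)‖⋆)` centered at `Xᵢ`, then
`f(X⁺) ≤ f(X) − Σᵢ ‖∇ᵢf(X)‖⋆²/(2(L⁰ᵢ + L¹ᵢ‖∇ᵢf(X)‖⋆))`. -/
theorem stmt_10 {p : ℕ} {m n : Fin p → ℕ}
    (nn : ∀ i, MatNorm (m i) (n i))
    (f : (∀ i, Fin (m i) → Fin (n i) → ℝ) → ℝ)
    (g : (∀ i, Fin (m i) → Fin (n i) → ℝ) → ∀ i, Fin (m i) → Fin (n i) → ℝ)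
    (hdiff : ContDiff ℝ 1 f)
    (hgrad : ∀ X H, fderiv ℝ f X H = ∑ i, tip (g X i) (H i))
    (L0 L1 : Fin p → ℝ) (hL0 : ∀ i, 0 ≤ L0 i) (hL1 : ∀ i, 0 ≤ L1 i)
    (hsmooth : ∀ i X Y, (nn i).dual (g X i - g Y i)
      ≤ (L0 i + L1 i * (nn i).dual (g X i)) * (nn i).N (X i - Y i))
    (X Xp : ∀ i, Fin (m i) → Fin (n i) → ℝ)
    (hupd : ∀ i, IsLMOMin (nn i) (g X i) (X i)
      ((nn i).dual (g X i) / (L0 i + L1 i * (nn i).dual (g X i))) (Xp i)) :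
    f Xp ≤ f X - ∑ i, ((nn i).dual (g X i)) ^ 2
      / (2 * (L0 i + L1 i * (nn i).dual (g X i))) := by
  classical
  set H : ∀ i, Fin (m i) → Fin (n i) → ℝ := Xp - X with hH
  -- notation
  set G : Fin p → ℝ := fun i => (nn i).dual (g X i) with hG
  set L : Fin p → ℝ := fun i => L0 i + L1 i * G i with hL
  set t : Fin p → ℝ := fun i => G i / L i with ht
  have hGnn : ∀ i, 0 ≤ G i := fun i => dual_nonneg _ _
  have hLnn : ∀ i, 0 ≤ L i := fun i =>
    add_nonneg (hL0 i) (mul_nonneg (hL1 i) (hGnn i))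
  have htnn : ∀ i, 0 ≤ t i := fun i => div_nonneg (hGnn i) (hLnn i)
  have hf : Differentiable ℝ f := hdiff.differentiable one_ne_zero
  -- derivative of s ↦ f (X + s • H)
  have hγ : ∀ s : ℝ, HasDerivAt (fun u : ℝ => X + u • H) H s := by
    intro s
    have h1 : HasDerivAt (fun u : ℝ => u • H) ((1:ℝ) • H) s :=
      (hasDerivAt_id s).smul_const H
    simpa using h1.const_add X
  have hφ : ∀ s : ℝ, HasDerivAt (fun u : ℝ => f (X + u • H))
      (fderiv ℝ f (X + s • H) H) s := fun s =>
    ((hf (X + s • H)).hasFDerivAt).comp_hasDerivAt s (hγ s)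
  have hcont : Continuous fun s : ℝ => fderiv ℝ f (X + s • H) H := by
    have h1 : Continuous fun s : ℝ => X + s • H :=
      continuous_const.add (continuous_id.smul continuous_const)
    exact ((hdiff.continuous_fderiv one_ne_zero).comp h1).clm_apply continuous_const
  have hint : IntervalIntegrable (fun s : ℝ => fderiv ℝ f (X + s • H) H)
      MeasureTheory.volume 0 1 := hcont.intervalIntegrable 0 1
  have hFTC : ∫ s in (0:ℝ)..1, fderiv ℝ f (X + s • H) H = f Xp - f X := by
    have := intervalIntegral.integral_eq_sub_of_hasDerivAt
      (fun s _ => hφ s) hint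
    have e1 : X + (1:ℝ) • H = Xp := by rw [one_smul, hH]; abel
    have e0 : X + (0:ℝ) • H = X := by rw [zero_smul, add_zero]
    rw [this, e1, e0]
  -- pointwise bound on the derivative
  set c : ℝ := ∑ i, L i * ((nn i).N (H i))^2 with hc
  have hcnn : 0 ≤ c :=
    Finset.sum_nonneg fun i _ => mul_nonneg (hLnn i) (sq_nonneg _)
  have hbound : ∀ s ∈ Set.Icc (0:ℝ) 1,
      fderiv ℝ f (X + s • H) H ≤ fderiv ℝ f X H + c * s := by
    intro s hs
    rw [hgrad, hgrad]
    have h1 : ∑ i, tip (g (X + s • H) i) (H i) - ∑ i, tip (g X i) (H i)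
        ≤ c * s := by
      rw [← Finset.sum_sub_distrib, hc, Finset.sum_mul]
      refine Finset.sum_le_sum fun i _ => ?_
      have e2 : tip (g (X + s • H) i) (H i) - tip (g X i) (H i)
          = - tip (g X i - g (X + s • H) i) (H i) := by
        rw [tip_sub_left]; ring
      rw [e2]
      have h3 : - tip (g X i - g (X + s • H) i) (H i)
          ≤ (nn i).dual (g X i - g (X + s • H) i) * (nn i).N (H i) :=
        neg_tip_le_dual _ _ _
      have h4 : (nn i).dual (g X i - g (X + s • H) i)
          ≤ L i * (nn i).N (X i - (X + s • H) i) := hsmooth i X (X + s • H)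
      have e5 : X i - (X + s • H) i = -(s • H i) := by
        show X i - (X i + s • H i) = -(s • H i); abel
      have h6 : (nn i).N (X i - (X + s • H) i) = s * (nn i).N (H i) := by
        rw [e5, N_neg, (nn i).smul, abs_of_nonneg hs.1]
      have hNnn := N_nonneg (nn i) (H i)
      calc - tip (g X i - g (X + s • H) i) (H i)
          ≤ (nn i).dual (g X i - g (X + s • H) i) * (nn i).N (H i) := h3
        _ ≤ (L i * (s * (nn i).N (H i))) * (nn i).N (H i) := by
            rw [← h6]
            exact mul_le_mul_of_nonneg_right h4 hNnn
        _ = L i * ((nn i).N (H i))^2 * s := by ring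
    linarith
  -- integrate the bound
  have hintRHS : IntervalIntegrable (fun s : ℝ => fderiv ℝ f X H + c * s)
      MeasureTheory.volume 0 1 :=
    (continuous_const.add (continuous_const.mul continuous_id)).intervalIntegrable 0 1
  have hmono : ∫ s in (0:ℝ)..1, fderiv ℝ f (X + s • H) H
      ≤ ∫ s in (0:ℝ)..1, (fderiv ℝ f X H + c * s) := by
    refine intervalIntegral.integral_mono_on (by norm_num) hint hintRHS ?_
    exact hbound
  have hcalc : ∫ s in (0:ℝ)..1, (fderiv ℝ f X H + c * s)
      = fderiv ℝ f X H + c / 2 := by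
    have hI : IntervalIntegrable (fun s : ℝ => c * s) MeasureTheory.volume 0 1 := by
      apply Continuous.intervalIntegrable
      exact continuous_const.mul continuous_id
    rw [intervalIntegral.integral_add (intervalIntegrable_const) hI,
      intervalIntegral.integral_const, intervalIntegral.integral_const_mul,
      integral_id]
    norm_num
    ring
  -- descent
  have hdescent : f Xp ≤ f X + fderiv ℝ f X H + c / 2 := by
    have := hmono
    rw [hFTC, hcalc] at this
    linarith
  -- bound the linear term via LMO
  have hlin : fderiv ℝ f X H ≤ ∑ i, -(t i * G i) := by
    rw [hgrad]
    refine Finset.sum_le_sum fun i _ => ?_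
    have := lmo_step (nn i) (g X i) (X i) (Xp i) (t i) (htnn i) (hupd i)
    have e : Xp i - X i = H i := rfl
    rwa [e] at this
  -- bound the quadratic term
  have hquad : c ≤ ∑ i, L i * (t i)^2 := by
    refine Finset.sum_le_sum fun i _ => ?_
    have hN : (nn i).N (H i) ≤ t i := (hupd i).1
    have h1 : ((nn i).N (H i))^2 ≤ (t i)^2 :=
      pow_le_pow_left₀ (N_nonneg (nn i) (H i)) hN 2
    exact mul_le_mul_of_nonneg_left h1 (hLnn i)
  -- per-block arithmetic
  have hper : ∀ i, -(t i * G i) + L i * (t i)^2 / 2 ≤ -(G i ^ 2 / (2 * L i)) := by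
    intro i
    rcases (hLnn i).eq_or_lt with h0 | h0
    · have ht0 : t i = G i / L i := rfl
      rw [ht0, ← h0]
      simp
    · have ht0 : t i = G i / L i := rfl
      rw [ht0]
      have : -(G i / L i * G i) + L i * (G i / L i)^2 / 2 = -(G i ^ 2 / (2 * L i)) := by
        field_simp
        ring
      linarith [this.le]
  calc f Xp ≤ f X + fderiv ℝ f X H + c / 2 := hdescent
    _ ≤ f X + (∑ i, -(t i * G i)) + (∑ i, L i * (t i)^2) / 2 := by
        have := hlin; have := hquad; linarith
    _ = f X + ∑ i, (-(t i * G i) + L i * (t i)^2 / 2) := by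
        rw [Finset.sum_add_distrib, Finset.sum_div]; ring
    _ ≤ f X + ∑ i, -(G i ^ 2 / (2 * L i)) :=
        add_le_add_right (Finset.sum_le_sum fun i _ => hper i) _
    _ = f X - ∑ i, G i ^ 2 / (2 * L i) := by
        rw [Finset.sum_neg_distrib]; ring
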